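/- Let k > 0 and h_t the one-dimensional Dunkl heat kernel, and let μ be the measure with density |x|^{2k} on ℝ. Then h_t(x, −x) ≍ μ(B(x,√t))^{-1} · t/(t + x²) uniformly in t > 0 and x ∈ ℝ, i.e., there exist constants c, C > 0 with c ≤ h_t(x,−x) · μ(B(x,√t)) · (t + x²)/t ≤ C for all t > 0, x ∈ ℝ. -/

import Mathlib

open Real MeasureTheory intervalIntegral

noncomputable def dunklE (k x y : ℝ) : ℝ :=
  (Real.Gamma (k + 1/2) / (Real.Gamma k * Real.Gamma (1/2))) *
    ∫ u in (-1:ℝ)..1, (1 - u) ^ (k - 1) * (1 + u) ^ k * Real.exp (x * y * u)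

/-- The one-dimensional Dunkl heat kernel. -/
noncomputable def heatH (k t x y : ℝ) : ℝ :=
  ((2:ℝ) ^ (2 * k + 1) * Real.Gamma (k + 1/2))⁻¹ * t ^ (-k - 1/2) *
    Real.exp (-(x ^ 2 + y ^ 2) / (4 * t)) *
    dunklE k (x / Real.sqrt (2 * t)) (y / Real.sqrt (2 * t))

/-- The measure `|x|^{2k} dx` on `ℝ`. -/
noncomputable def dunklMeasure1 (k : ℝ) : Measure ℝ :=
  volume.withDensity (fun x => ENNReal.ofReal (|x| ^ (2 * k)))

section AuxLemmas
open Set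

lemma rpow_mul_exp_le {k y : ℝ} (hk : 0 < k) (hy : 0 ≤ y) :
    y ^ k * Real.exp (-y) ≤ k ^ k := by
  have h1 : y / k ≤ Real.exp (y / k - 1) := by
    have := Real.add_one_le_exp (y / k - 1)
    linarith
  have h2 : (y / k) ^ k ≤ Real.exp (y / k - 1) ^ k :=
    Real.rpow_le_rpow (by positivity) h1 hk.le
  have h3 : Real.exp (y / k - 1) ^ k = Real.exp ((y / k - 1) * k) := by
    rw [← Real.exp_mul]
  have h4 : (y / k) ^ k = y ^ k / k ^ k := Real.div_rpow hy hk.le k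
  have h5 : (y / k - 1) * k = y - k := by field_simp
  rw [h4, h3, h5] at h2
  have hkk : (0:ℝ) < k ^ k := Real.rpow_pos_of_pos hk k
  rw [div_le_iff₀ hkk] at h2
  calc y ^ k * Real.exp (-y) ≤ Real.exp (y - k) * k ^ k * Real.exp (-y) := by
        apply mul_le_mul_of_nonneg_right h2 (Real.exp_pos _).le
    _ = k ^ k * Real.exp (-k) := by
        rw [mul_comm (Real.exp (y-k)) (k^k), mul_assoc, ← Real.exp_add]; ring_nf
    _ ≤ k ^ k * 1 := by
        apply mul_le_mul_of_nonneg_left _ hkk.le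
        exact Real.exp_le_one_iff.mpr (by linarith)
    _ = k ^ k := mul_one _

lemma intInt {k : ℝ} (hk : 0 < k) {g : ℝ → ℝ} (hg : Continuous g) (a b : ℝ) :
    IntervalIntegrable (fun u => (1 - u) ^ (k - 1) * g u) volume a b := by
  have h1 : IntervalIntegrable (fun u : ℝ => (1 - u) ^ (k - 1)) volume a b := by
    have h := (intervalIntegral.intervalIntegrable_rpow'
      (a := 1 - a) (b := 1 - b) (r := k - 1) (by linarith)).comp_sub_left 1
    simpa using h
  exact h1.mul_continuousOn hg.continuousOn

lemma cont_pow_exp {k : ℝ} (hk : 0 < k) (c : ℝ) :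
    Continuous (fun u : ℝ => (1 + u) ^ k * Real.exp (c * (1 + u))) :=
  ((continuous_const.add continuous_id).rpow_const (fun _ => Or.inr hk.le)).mul
    (Real.continuous_exp.comp (continuous_const.mul (continuous_const.add continuous_id)))

lemma minmax_rpow {k b : ℝ} (h1 : 1 ≤ b) (h2 : b ≤ 2) :
    min 1 (2^(k-1)) ≤ b^(k-1) ∧ b^(k-1) ≤ max 1 (2^(k-1)) := by
  rcases le_or_gt 1 k with hk | hk
  · constructor
    · calc min 1 (2^(k-1)) ≤ 1 := min_le_left _ _
        _ = (1:ℝ)^(k-1) := (Real.one_rpow _).symm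
        _ ≤ b^(k-1) := Real.rpow_le_rpow zero_le_one h1 (by linarith)
    · calc b^(k-1) ≤ 2^(k-1) := Real.rpow_le_rpow (by linarith) h2 (by linarith)
        _ ≤ max 1 (2^(k-1)) := le_max_right _ _
  · constructor
    · calc min 1 (2^(k-1)) ≤ 2^(k-1) := min_le_right _ _
        _ ≤ b^(k-1) := Real.rpow_le_rpow_of_nonpos (by linarith) h2 (by linarith)
    · calc b^(k-1) ≤ (1:ℝ)^(k-1) :=
          Real.rpow_le_rpow_of_nonpos one_pos h1 (by linarith)
        _ = 1 := Real.one_rpow _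
        _ ≤ max 1 (2^(k-1)) := le_max_left _ _

lemma int_pow_aux {k δ : ℝ} (hk : 0 < k) :
    ∫ u in (-1:ℝ)..(-1+δ), (1+u)^k = δ^(k+1)/(k+1) := by
  have h1 := intervalIntegral.integral_comp_add_right (a := (-1:ℝ)) (b := -1+δ)
    (fun v => v^k) 1
  simp only [neg_add_cancel, neg_add_rev] at h1
  have h2 : ∫ u in (-1:ℝ)..(-1+δ), (1+u)^k = ∫ u in (-1:ℝ)..(-1+δ), (u+1)^k := by
    congr 1; ext u; ring_nf
  rw [h2, h1]
  have h3 : -1 + δ + 1 = δ := by ring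
  rw [h3]
  rw [integral_rpow (Or.inl (by linarith))]
  rw [Real.zero_rpow (by linarith)]
  ring

lemma J_lower {k s : ℝ} (hk : 0 < k) (hs : 0 ≤ s) :
    min 1 (2^(k-1)) * Real.exp (-1) / (k+1) * (1+s)^(-(k+1))
      ≤ ∫ u in (-1:ℝ)..1, (1 - u) ^ (k - 1) * ((1 + u) ^ k * Real.exp (-s * (1 + u))) := by
  set m : ℝ := min 1 (2^(k-1)) with hm
  have hmpos : 0 < m := lt_min one_pos (Real.rpow_pos_of_pos two_pos _)
  set δ : ℝ := (1+s)⁻¹ with hδ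
  have hδpos : 0 < δ := by positivity
  have hδ1 : δ ≤ 1 := by
    rw [hδ]; rw [inv_le_one_iff₀]; right; linarith
  have hint : ∀ a b : ℝ, IntervalIntegrable
      (fun u => (1 - u) ^ (k - 1) * ((1 + u) ^ k * Real.exp (-s * (1 + u)))) volume a b := by
    intro a b
    have := cont_pow_exp hk (-s)
    exact intInt hk this a b
  -- step 1 : restrict to [-1, -1+δ]
  have hsplit : ∫ u in (-1:ℝ)..(-1+δ), (1 - u) ^ (k - 1) * ((1 + u) ^ k * Real.exp (-s * (1 + u)))
      ≤ ∫ u in (-1:ℝ)..1, (1 - u) ^ (k - 1) * ((1 + u) ^ k * Real.exp (-s * (1 + u))) := by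
    rw [← intervalIntegral.integral_add_adjacent_intervals (hint (-1) (-1+δ)) (hint (-1+δ) 1)]
    have hnn : 0 ≤ ∫ u in (-1+δ:ℝ)..1, (1 - u) ^ (k - 1) * ((1 + u) ^ k * Real.exp (-s * (1 + u))) := by
      apply intervalIntegral.integral_nonneg (by linarith)
      intro u hu
      have h1 : (0:ℝ) ≤ 1 - u := by linarith [hu.2]
      have h2 : (0:ℝ) ≤ 1 + u := by linarith [hu.1, hδpos]
      positivity
    linarith
  -- step 2 : pointwise lower bound on [-1, -1+δ]
  have hpt : ∫ u in (-1:ℝ)..(-1+δ), m * Real.exp (-1) * (1+u)^k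
      ≤ ∫ u in (-1:ℝ)..(-1+δ), (1 - u) ^ (k - 1) * ((1 + u) ^ k * Real.exp (-s * (1 + u))) := by
    apply intervalIntegral.integral_mono_on (by linarith) _ (hint _ _)
    · intro u hu
      have hu1 : -1 ≤ u := hu.1
      have hu2 : u ≤ -1 + δ := hu.2
      have hb1 : (1:ℝ) ≤ 1 - u := by linarith
      have hb2 : 1 - u ≤ 2 := by linarith
      have hA := (minmax_rpow (k := k) hb1 hb2).1
      have hC : Real.exp (-1) ≤ Real.exp (-s * (1+u)) := by
        apply Real.exp_le_exp.mpr
        have h1 : s * (1+u) ≤ s * δ := by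
          apply mul_le_mul_of_nonneg_left (by linarith) hs
        have h2 : s * δ ≤ 1 := by
          rw [hδ]
          rw [mul_inv_le_iff₀ (by linarith)]
          linarith
        nlinarith
      have hBnn : (0:ℝ) ≤ (1+u)^k := Real.rpow_nonneg (by linarith) _
      calc m * Real.exp (-1) * (1+u)^k
          ≤ (1-u)^(k-1) * Real.exp (-s * (1+u)) * (1+u)^k := by
            apply mul_le_mul_of_nonneg_right _ hBnn
            exact mul_le_mul hA hC (Real.exp_pos _).le
              (Real.rpow_nonneg (by linarith) _)
        _ = (1 - u) ^ (k - 1) * ((1 + u) ^ k * Real.exp (-s * (1 + u))) := by ring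
    · exact (continuous_const.mul ((continuous_const.add continuous_id).rpow_const
        (fun _ => Or.inr hk.le))).intervalIntegrable _ _
  have hval : ∫ u in (-1:ℝ)..(-1+δ), m * Real.exp (-1) * (1+u)^k
      = m * Real.exp (-1) / (k+1) * (1+s)^(-(k+1)) := by
    rw [intervalIntegral.integral_const_mul, int_pow_aux hk]
    have : δ^(k+1) = (1+s)^(-(k+1)) := by
      rw [hδ, Real.inv_rpow (by positivity), ← Real.rpow_neg (by positivity)]
    rw [this]; ring
  linarith

lemma int_exp_aux {s : ℝ} (hs : 0 < s) :
    ∫ u in (-1:ℝ)..0, Real.exp (-(s/2) * (1+u)) ≤ 2/s := by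
  have h1 : ∫ u in (-1:ℝ)..0, Real.exp (-(s/2) * (1+u))
      = ∫ v in (0:ℝ)..1, Real.exp (-(s/2) * v) := by
    have := intervalIntegral.integral_comp_add_right (a := (-1:ℝ)) (b := 0)
      (fun v => Real.exp (-(s/2) * v)) 1
    simp only [neg_add_cancel, zero_add] at this
    rw [← this]
    congr 1; ext u; ring_nf
  have h2 : ∫ v in (0:ℝ)..1, Real.exp (-(s/2) * v)
      = (-(s/2))⁻¹ * (Real.exp (-(s/2)) - Real.exp 0) := by
    have := intervalIntegral.integral_comp_mul_left (a := (0:ℝ)) (b := 1)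
      Real.exp (c := -(s/2)) (by simp; linarith)
    rw [this]
    simp [integral_exp, smul_eq_mul]
  rw [h1, h2]
  rw [Real.exp_zero]
  have h3 : Real.exp (-(s/2)) ≥ 0 := (Real.exp_pos _).le
  have h4 : (-(s/2))⁻¹ * (Real.exp (-(s/2)) - 1) = (2/s) * (1 - Real.exp (-(s/2))) := by
    have h5 : (-(s/2))⁻¹ = -(2/s) := by rw [← neg_inv, inv_div]
    rw [h5]; ring
  rw [h4]
  have : 1 - Real.exp (-(s/2)) ≤ 1 := by linarith
  calc (2/s) * (1 - Real.exp (-(s/2))) ≤ (2/s) * 1 :=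
        mul_le_mul_of_nonneg_left this (by positivity)
    _ = 2/s := mul_one _

lemma int_rpow_aux {k : ℝ} (hk : 0 < k) :
    ∫ u in (0:ℝ)..1, (1-u)^(k-1) = 1/k := by
  have h1 := intervalIntegral.integral_comp_sub_left (a := (0:ℝ)) (b := 1)
    (fun v => v^(k-1)) 1
  simp only [sub_self, sub_zero] at h1
  rw [h1, integral_rpow (Or.inl (by linarith))]
  rw [Real.one_rpow, Real.zero_rpow (by linarith)]
  field_simp
  rw [sub_zero, one_mul, sub_add_cancel, div_self hk.ne']


noncomputable def B0 (k : ℝ) : ℝ := ∫ u in (-1:ℝ)..1, (1-u)^(k-1) * (1+u)^k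

lemma B0_nonneg (k : ℝ) : 0 ≤ B0 k := by
  apply intervalIntegral.integral_nonneg (by norm_num)
  intro u hu
  have h1 : (0:ℝ) ≤ 1 - u := by linarith [hu.2]
  have h2 : (0:ℝ) ≤ 1 + u := by linarith [hu.1]
  positivity

lemma J_upper {k s : ℝ} (hk : 0 < k) (hs : 0 ≤ s) :
    ∫ u in (-1:ℝ)..1, (1 - u) ^ (k - 1) * ((1 + u) ^ k * Real.exp (-s * (1 + u)))
      ≤ (2^(k+1) * (B0 k + (2*k)^k * (2 * max 1 (2^(k-1)) + 2/k))) * (1+s)^(-(k+1)) := by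
  set M : ℝ := max 1 (2^(k-1)) with hM
  have hMpos : 0 < M := lt_max_of_lt_left one_pos
  have hCnn : (0:ℝ) ≤ (2*k)^k * (2 * M + 2/k) := by positivity
  have hint : ∀ a b : ℝ, IntervalIntegrable
      (fun u => (1 - u) ^ (k - 1) * ((1 + u) ^ k * Real.exp (-s * (1 + u)))) volume a b :=
    fun a b => intInt hk (cont_pow_exp hk (-s)) a b
  have hps : (0:ℝ) < 1 + s := by linarith
  have hpow : (0:ℝ) < (1+s)^(-(k+1)) := Real.rpow_pos_of_pos hps _
  rcases le_or_gt s 1 with hs1 | hs1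
  · -- small s : compare with B0
    have h1 : ∫ u in (-1:ℝ)..1, (1 - u) ^ (k - 1) * ((1 + u) ^ k * Real.exp (-s * (1 + u)))
        ≤ B0 k := by
      rw [B0]
      apply intervalIntegral.integral_mono_on (by norm_num) (hint _ _)
        (intInt hk ((continuous_const.add continuous_id).rpow_const (fun _ => Or.inr hk.le)) _ _)
      intro u hu
      have h2 : (0:ℝ) ≤ 1 - u := by linarith [hu.2]
      have h3 : (0:ℝ) ≤ 1 + u := by linarith [hu.1]
      have h4 : Real.exp (-s * (1+u)) ≤ 1 := by
        rw [Real.exp_le_one_iff]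
        nlinarith
      have h5 : (1 + u) ^ k * Real.exp (-s * (1 + u)) ≤ (1 + u) ^ k := by
        nlinarith [Real.rpow_nonneg h3 k, Real.exp_pos (-s * (1+u))]
      exact mul_le_mul_of_nonneg_left h5 (Real.rpow_nonneg h2 _)
    have h6 : (1:ℝ) ≤ 2^(k+1) * (1+s)^(-(k+1)) := by
      have h7 : (2:ℝ)^(-(k+1)) ≤ (1+s)^(-(k+1)) :=
        Real.rpow_le_rpow_of_nonpos hps (by linarith) (by linarith)
      calc (1:ℝ) = 2^(k+1) * 2^(-(k+1)) := by
            rw [← Real.rpow_add two_pos, show k+1+ -(k+1) = 0 by ring, Real.rpow_zero]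
        _ ≤ 2^(k+1) * (1+s)^(-(k+1)) :=
            mul_le_mul_of_nonneg_left h7 (by positivity)
    calc ∫ u in (-1:ℝ)..1, (1 - u) ^ (k - 1) * ((1 + u) ^ k * Real.exp (-s * (1 + u)))
        ≤ B0 k := h1
      _ ≤ B0 k * (2^(k+1) * (1+s)^(-(k+1))) := le_mul_of_one_le_right (B0_nonneg k) h6
      _ ≤ (2^(k+1) * (B0 k + (2*k)^k * (2 * M + 2/k))) * (1+s)^(-(k+1)) := by
          have := mul_nonneg hCnn hpow.le
          nlinarith [mul_nonneg (mul_nonneg hCnn hpow.le) (Real.rpow_nonneg (by norm_num : (0:ℝ) ≤ 2) (k+1))]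
  · -- large s
    have hspos : (0:ℝ) < s := by linarith
    -- pointwise bound
    have hpt : ∫ u in (-1:ℝ)..1, (1 - u) ^ (k - 1) * ((1 + u) ^ k * Real.exp (-s * (1 + u)))
        ≤ ∫ u in (-1:ℝ)..1, (2*k/s)^k * ((1 - u) ^ (k - 1) * Real.exp (-(s/2) * (1+u))) := by
      apply intervalIntegral.integral_mono_on (by norm_num) (hint _ _)
      · exact (intInt hk (Real.continuous_exp.comp
          (continuous_const.mul (continuous_const.add continuous_id))) _ _).const_mul _
      intro u hu
      have h2 : (0:ℝ) ≤ 1 - u := by linarith [hu.2]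
      have h3 : (0:ℝ) ≤ 1 + u := by linarith [hu.1]
      set y : ℝ := s/2 * (1+u) with hy
      have hynn : 0 ≤ y := by positivity
      have key : (1 + u) ^ k * Real.exp (-s * (1 + u)) ≤ (2*k/s)^k * Real.exp (-(s/2) * (1+u)) := by
        have e1 : Real.exp (-s * (1+u)) = Real.exp (-y) * Real.exp (-(s/2) * (1+u)) := by
          rw [← Real.exp_add]; congr 1; rw [hy]; ring
        have e2 : (1+u : ℝ) = (2/s) * y := by rw [hy]; field_simp
        have e3 : (1+u:ℝ)^k = (2/s)^k * y^k := by
          rw [e2, Real.mul_rpow (by positivity) hynn]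
        have e4 : ((2:ℝ)*k/s)^k = (2/s)^k * k^k := by
          rw [show (2:ℝ)*k/s = (2/s)*k by ring, Real.mul_rpow (by positivity) hk.le]
        have e5 : (1+u)^k * Real.exp (-y) ≤ (2*k/s)^k := by
          rw [e3, e4, mul_assoc]
          exact mul_le_mul_of_nonneg_left (rpow_mul_exp_le hk hynn) (by positivity)
        calc (1 + u) ^ k * Real.exp (-s * (1 + u))
            = ((1+u)^k * Real.exp (-y)) * Real.exp (-(s/2) * (1+u)) := by
              rw [e1]; ring
          _ ≤ (2*k/s)^k * Real.exp (-(s/2) * (1+u)) :=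
              mul_le_mul_of_nonneg_right e5 (Real.exp_pos _).le
      calc (1 - u) ^ (k - 1) * ((1 + u) ^ k * Real.exp (-s * (1 + u)))
          ≤ (1 - u) ^ (k - 1) * ((2*k/s)^k * Real.exp (-(s/2) * (1+u))) :=
            mul_le_mul_of_nonneg_left key (Real.rpow_nonneg h2 _)
        _ = (2*k/s)^k * ((1 - u) ^ (k - 1) * Real.exp (-(s/2) * (1+u))) := by ring
    rw [intervalIntegral.integral_const_mul] at hpt
    -- bound the remaining integral
    have hintE : ∀ a b : ℝ, IntervalIntegrable
        (fun u => (1 - u) ^ (k - 1) * Real.exp (-(s/2) * (1+u))) volume a b :=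
      fun a b => intInt hk (Real.continuous_exp.comp
        (continuous_const.mul (continuous_const.add continuous_id))) a b
    have hsplit : ∫ u in (-1:ℝ)..1, (1 - u) ^ (k - 1) * Real.exp (-(s/2) * (1+u))
        = (∫ u in (-1:ℝ)..0, (1 - u) ^ (k - 1) * Real.exp (-(s/2) * (1+u)))
          + ∫ u in (0:ℝ)..1, (1 - u) ^ (k - 1) * Real.exp (-(s/2) * (1+u)) :=
      (intervalIntegral.integral_add_adjacent_intervals (hintE _ _) (hintE _ _)).symm
    have hp1 : ∫ u in (-1:ℝ)..0, (1 - u) ^ (k - 1) * Real.exp (-(s/2) * (1+u)) ≤ M * (2/s) := by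
      have h1 : ∫ u in (-1:ℝ)..0, (1 - u) ^ (k - 1) * Real.exp (-(s/2) * (1+u))
          ≤ ∫ u in (-1:ℝ)..0, M * Real.exp (-(s/2) * (1+u)) := by
        apply intervalIntegral.integral_mono_on (by norm_num) (hintE _ _)
          (((Real.continuous_exp.comp (continuous_const.mul
            (continuous_const.add continuous_id))).intervalIntegrable _ _).const_mul _)
        intro u hu
        have hb1 : (1:ℝ) ≤ 1 - u := by linarith [hu.2]
        have hb2 : 1 - u ≤ 2 := by linarith [hu.1]
        exact mul_le_mul_of_nonneg_right (minmax_rpow hb1 hb2).2 (Real.exp_pos _).le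
      rw [intervalIntegral.integral_const_mul] at h1
      calc ∫ u in (-1:ℝ)..0, (1 - u) ^ (k - 1) * Real.exp (-(s/2) * (1+u))
          ≤ M * ∫ u in (-1:ℝ)..0, Real.exp (-(s/2) * (1+u)) := h1
        _ ≤ M * (2/s) := mul_le_mul_of_nonneg_left (int_exp_aux hspos) hMpos.le
    have hexps : Real.exp (-(s/2)) ≤ 2/s := by
      have h1 := Real.add_one_le_exp (s/2)
      rw [Real.exp_neg]
      calc (Real.exp (s/2))⁻¹ ≤ (s/2)⁻¹ := by
            apply inv_anti₀ (by positivity); linarith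
        _ = 2/s := inv_div s 2
    have hp2 : ∫ u in (0:ℝ)..1, (1 - u) ^ (k - 1) * Real.exp (-(s/2) * (1+u)) ≤ (1/k) * (2/s) := by
      have h1 : ∫ u in (0:ℝ)..1, (1 - u) ^ (k - 1) * Real.exp (-(s/2) * (1+u))
          ≤ ∫ u in (0:ℝ)..1, (1 - u) ^ (k - 1) * (2/s) := by
        apply intervalIntegral.integral_mono_on (by norm_num) (hintE _ _)
          (intInt hk continuous_const _ _)
        intro u hu
        have h2 : (0:ℝ) ≤ 1 - u := by linarith [hu.2]
        have h3 : Real.exp (-(s/2) * (1+u)) ≤ 2/s := by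
          calc Real.exp (-(s/2) * (1+u)) ≤ Real.exp (-(s/2)) := by
                apply Real.exp_le_exp.mpr; nlinarith [hu.1]
            _ ≤ 2/s := hexps
        exact mul_le_mul_of_nonneg_left h3 (Real.rpow_nonneg h2 _)
      rw [intervalIntegral.integral_mul_const, int_rpow_aux hk] at h1
      linarith
    have htot : ∫ u in (-1:ℝ)..1, (1 - u) ^ (k - 1) * Real.exp (-(s/2) * (1+u))
        ≤ (2*M + 2/k)/s := by
      rw [hsplit]
      have : M * (2/s) + (1/k) * (2/s) = (2*M + 2/k)/s := by
        field_simp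
      linarith
    -- final rpow algebra
    have hfact : (2*k/s)^k * ((2*M + 2/k)/s) = (2*k)^k * (2*M+2/k) * (s^(-k) * s⁻¹) := by
      rw [Real.div_rpow (by positivity) hspos.le k, Real.rpow_neg hspos.le]
      field_simp
    have hdecay : s^(-k) * s⁻¹ ≤ 2^(k+1) * (1+s)^(-(k+1)) := by
      have e1 : s^(-k) * s⁻¹ = s^(-(k+1)) := by
        rw [← Real.rpow_neg_one s, ← Real.rpow_add hspos]
        ring_nf
      have h2 : (1+s)/2 ≤ s := by linarith
      have ha : s^(-(k+1)) ≤ ((1+s)/2)^(-(k+1)) :=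
        Real.rpow_le_rpow_of_nonpos (by linarith) h2 (by linarith)
      have hb : ((1+s)/2)^(-(k+1)) = (1+s)^(-(k+1)) * 2^(k+1) := by
        rw [Real.div_rpow (by linarith) (by norm_num) (-(k+1)),
          Real.rpow_neg (by norm_num : (0:ℝ) ≤ 2), div_inv_eq_mul]
      rw [hb] at ha
      rw [e1]
      linarith [ha]
    have hnn2 : (0:ℝ) ≤ (2*k/s)^k := Real.rpow_nonneg (by positivity) _
    calc ∫ u in (-1:ℝ)..1, (1 - u) ^ (k - 1) * ((1 + u) ^ k * Real.exp (-s * (1 + u)))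
        ≤ (2*k/s)^k * ∫ u in (-1:ℝ)..1, (1 - u) ^ (k - 1) * Real.exp (-(s/2) * (1+u)) := hpt
      _ ≤ (2*k/s)^k * ((2*M + 2/k)/s) := mul_le_mul_of_nonneg_left htot hnn2
      _ = (2*k)^k * (2*M+2/k) * (s^(-k) * s⁻¹) := hfact
      _ ≤ (2*k)^k * (2*M+2/k) * (2^(k+1) * (1+s)^(-(k+1))) :=
          mul_le_mul_of_nonneg_left hdecay (by positivity)
      _ ≤ (2^(k+1) * (B0 k + (2*k)^k * (2 * M + 2/k))) * (1+s)^(-(k+1)) := by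
          nlinarith [B0_nonneg k, hpow.le, mul_nonneg (B0_nonneg k) hpow.le,
            Real.rpow_pos_of_pos two_pos (k+1)]

lemma density_cont {k : ℝ} (hk : 0 < k) : Continuous (fun y : ℝ => |y| ^ (2*k)) :=
  continuous_abs.rpow_const (fun x => Or.inr (by positivity))

lemma measure_toReal {k : ℝ} (hk : 0 < k) (x r : ℝ) :
    (dunklMeasure1 k (Metric.closedBall x r)).toReal
      = ∫ y in Set.Icc (x - r) (x + r), |y| ^ (2*k) := by
  have hint : IntegrableOn (fun y : ℝ => |y| ^ (2*k)) (Set.Icc (x-r) (x+r)) volume :=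
    (density_cont hk).integrableOn_Icc
  have hnn : 0 ≤ᵐ[volume.restrict (Set.Icc (x-r) (x+r))] (fun y : ℝ => |y| ^ (2*k)) :=
    Filter.Eventually.of_forall fun y => Real.rpow_nonneg (abs_nonneg y) _
  rw [Real.closedBall_eq_Icc, dunklMeasure1, withDensity_apply _ measurableSet_Icc,
    ← ofReal_integral_eq_lintegral_ofReal hint hnn, ENNReal.toReal_ofReal]
  exact setIntegral_nonneg measurableSet_Icc fun y _ => Real.rpow_nonneg (abs_nonneg y) _

lemma measure_upper {k : ℝ} (hk : 0 < k) (x r : ℝ) (hr : 0 < r) :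
    (dunklMeasure1 k (Metric.closedBall x r)).toReal ≤ 2*r*(|x|+r)^(2*k) := by
  rw [measure_toReal hk x r]
  have h1 : ∫ y in Set.Icc (x - r) (x + r), |y| ^ (2*k)
      ≤ ∫ _ in Set.Icc (x - r) (x + r), (|x|+r) ^ (2*k) := by
    apply setIntegral_mono_on ((density_cont hk).integrableOn_Icc)
      (integrableOn_const measure_Icc_lt_top.ne) measurableSet_Icc
    intro y hy
    apply Real.rpow_le_rpow (abs_nonneg y) _ (by positivity)
    have h2 := neg_abs_le x; have h3 := le_abs_self x
    rw [abs_le]; constructor <;> [linarith [hy.1]; linarith [hy.2]]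
  calc _ ≤ _ := h1
    _ = 2*r*(|x|+r)^(2*k) := by
        rw [setIntegral_const, Real.volume_real_Icc_of_le (by linarith),
          smul_eq_mul]
        ring

lemma measure_lower {k : ℝ} (hk : 0 < k) (x r : ℝ) (hr : 0 < r) :
    r/2 * ((|x|+r)/2)^(2*k) ≤ (dunklMeasure1 k (Metric.closedBall x r)).toReal := by
  rw [measure_toReal hk x r]
  -- choose subinterval
  obtain ⟨a, ha1, ha2, ha3⟩ : ∃ a, x - r ≤ a ∧ a + r/2 ≤ x + r ∧
      ∀ y ∈ Set.Icc a (a + r/2), (|x|+r)/2 ≤ |y| := by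
    rcases le_or_gt 0 x with hx | hx
    · refine ⟨x + r/2, by linarith, by linarith, fun y hy => ?_⟩
      have : 0 ≤ y := by linarith [hy.1]
      rw [abs_of_nonneg this, abs_of_nonneg hx]
      linarith [hy.1]
    · refine ⟨x - r, by linarith, by linarith, fun y hy => ?_⟩
      have hy2 := hy.2
      have : y ≤ 0 := by linarith
      rw [abs_of_nonpos this, abs_of_neg hx]
      linarith
  have hsub : Set.Icc a (a + r/2) ⊆ Set.Icc (x - r) (x + r) :=
    Set.Icc_subset_Icc ha1 (by linarith)
  have h1 : ∫ _ in Set.Icc a (a + r/2), ((|x|+r)/2) ^ (2*k)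
      ≤ ∫ y in Set.Icc a (a + r/2), |y| ^ (2*k) := by
    apply setIntegral_mono_on (integrableOn_const measure_Icc_lt_top.ne)
      (((density_cont hk).integrableOn_Icc).mono_set hsub) measurableSet_Icc
    intro y hy
    exact Real.rpow_le_rpow (by positivity) (ha3 y hy) (by positivity)
  have h2 : ∫ y in Set.Icc a (a + r/2), |y| ^ (2*k)
      ≤ ∫ y in Set.Icc (x - r) (x + r), |y| ^ (2*k) := by
    apply setIntegral_mono_set ((density_cont hk).integrableOn_Icc)
      (Filter.Eventually.of_forall fun y => Real.rpow_nonneg (abs_nonneg y) _)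
      (HasSubset.Subset.eventuallyLE hsub)
  have h3 : ∫ _ in Set.Icc a (a + r/2), ((|x|+r)/2) ^ (2*k) = r/2 * ((|x|+r)/2)^(2*k) := by
    rw [setIntegral_const, Real.volume_real_Icc_of_le (by linarith), smul_eq_mul]
    ring_nf
  linarith

lemma heatH_eq {k t : ℝ} (x : ℝ) (hk : 0 < k) (ht : 0 < t) :
    heatH k t x (-x)
      = (((2:ℝ)^(2*k+1) * Real.Gamma (k+1/2))⁻¹
          * (Real.Gamma (k+1/2)/(Real.Gamma k * Real.Gamma (1/2)))) * t^(-k-1/2) *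
        ∫ u in (-1:ℝ)..1,
          (1-u)^(k-1) * ((1+u)^k * Real.exp (-(x^2/(2*t)) * (1+u))) := by
  unfold heatH dunklE
  have h2t : Real.sqrt (2*t) * Real.sqrt (2*t) = 2*t := Real.mul_self_sqrt (by linarith)
  have hab : x / Real.sqrt (2*t) * (-x / Real.sqrt (2*t)) = -(x^2/(2*t)) := by
    rw [div_mul_div_comm, h2t]; ring_nf
  rw [hab]
  have hexp : -(x^2 + (-x)^2)/(4*t) = -(x^2/(2*t)) := by ring
  rw [hexp]
  have key : ∫ u in (-1:ℝ)..1, (1-u)^(k-1) * ((1+u)^k * Real.exp (-(x^2/(2*t)) * (1+u)))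
      = Real.exp (-(x^2/(2*t))) *
        ∫ u in (-1:ℝ)..1, (1-u)^(k-1) * (1+u)^k * Real.exp (-(x^2/(2*t)) * u) := by
    rw [← intervalIntegral.integral_const_mul]
    congr 1; ext u
    rw [show -(x^2/(2*t)) * (1+u) = -(x^2/(2*t)) + -(x^2/(2*t)) * u by ring, Real.exp_add]
    ring
  rw [key]
  ring

lemma core_bounds {k t x : ℝ} (hk : 0 < k) (ht : 0 < t) :
    1 ≤ t^(-k-1/2) * (1+x^2/(2*t))^(-(k+1))
          * (Real.sqrt t * (|x|+Real.sqrt t)^(2*k)) * ((t+x^2)/t)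
    ∧ t^(-k-1/2) * (1+x^2/(2*t))^(-(k+1))
          * (Real.sqrt t * (|x|+Real.sqrt t)^(2*k)) * ((t+x^2)/t) ≤ 2^(2*k+1) := by
  set r : ℝ := Real.sqrt t with hr
  have hrpos : 0 < r := Real.sqrt_pos.mpr ht
  have hr2 : r^2 = t := Real.sq_sqrt ht.le
  set q : ℝ := (t+x^2)/t with hq
  have hq1 : 1 ≤ q := by rw [hq, le_div_iff₀ ht]; nlinarith [sq_nonneg x]
  have hqpos : 0 < q := lt_of_lt_of_le one_pos hq1
  set A : ℝ := (|x|+r)^2/t with hA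
  have hBnn : (0:ℝ) ≤ |x| + r := by positivity
  have hA1 : q ≤ A := by
    rw [hq, hA]
    gcongr
    nlinarith [abs_nonneg x, sq_abs x, hrpos.le]
  have hA2 : A ≤ 2*q := by
    rw [hA, hq]
    rw [div_le_iff₀ ht]
    have : 2 * ((t+x^2)/t) * t = 2*(t+x^2) := by field_simp
    rw [this]
    nlinarith [sq_nonneg (|x| - r), sq_abs x]
  have hs1 : 1 + x^2/(2*t) ≤ q := by
    have e : q - (1+x^2/(2*t)) = x^2/(2*t) := by rw [hq]; field_simp; ring
    nlinarith [sq_nonneg x, div_nonneg (sq_nonneg x) (by linarith : (0:ℝ) ≤ 2*t)]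
  have hs2 : q/2 ≤ 1 + x^2/(2*t) := by
    have e : (1+x^2/(2*t)) - q/2 = 1/2 := by rw [hq]; field_simp; ring
    linarith
  have hspos : (0:ℝ) < 1 + x^2/(2*t) := by positivity
  -- rpow algebra
  have e1 : (|x|+r)^(2*k) = ((|x|+r)^2)^k := by
    rw [← Real.rpow_natCast (|x|+r) 2, ← Real.rpow_mul hBnn]
    norm_num
  have e3 : t^(-k-1/2) * r = (t^k)⁻¹ := by
    rw [hr, Real.sqrt_eq_rpow, ← Real.rpow_add ht, show -k-1/2 + 1/2 = -k by ring,
      Real.rpow_neg ht.le]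
  have e2 : A^k = ((|x|+r)^2)^k * (t^k)⁻¹ := by
    rw [hA, Real.div_rpow (by positivity) ht.le k, div_eq_mul_inv]
  have E1 : t^(-k-1/2) * (r * (|x|+r)^(2*k)) = A^k := by
    rw [e1, e2, ← mul_assoc, e3]; ring
  -- bounds on A^k etc.
  have hAk_lo : q^k ≤ A^k := Real.rpow_le_rpow hqpos.le hA1 hk.le
  have hAk_hi : A^k ≤ 2^k * q^k := by
    calc A^k ≤ (2*q)^k := Real.rpow_le_rpow (by positivity) hA2 hk.le
      _ = 2^k * q^k := Real.mul_rpow (by norm_num) hqpos.le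
  have hpw_lo : q^(-(k+1)) ≤ (1+x^2/(2*t))^(-(k+1)) :=
    Real.rpow_le_rpow_of_nonpos hspos hs1 (by linarith)
  have hpw_hi : (1+x^2/(2*t))^(-(k+1)) ≤ q^(-(k+1)) * 2^(k+1) := by
    have ha : (1+x^2/(2*t))^(-(k+1)) ≤ (q/2)^(-(k+1)) :=
      Real.rpow_le_rpow_of_nonpos (by positivity) hs2 (by linarith)
    have hb : (q/2)^(-(k+1)) = q^(-(k+1)) * 2^(k+1) := by
      rw [Real.div_rpow hqpos.le (by norm_num) (-(k+1)),
        Real.rpow_neg (by norm_num : (0:ℝ) ≤ 2), div_inv_eq_mul]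
    rw [hb] at ha; exact ha
  have hqk : (0:ℝ) < q^k := Real.rpow_pos_of_pos hqpos _
  have hqk1 : (0:ℝ) < q^(-(k+1)) := Real.rpow_pos_of_pos hqpos _
  have hpw_pos : (0:ℝ) < (1+x^2/(2*t))^(-(k+1)) := Real.rpow_pos_of_pos hspos _
  have hAk_pos : (0:ℝ) < A^k := Real.rpow_pos_of_pos (by positivity) _
  have hqq : q^k * q^(-(k+1)) * q = 1 := by
    rw [← Real.rpow_add hqpos]
    nth_rewrite 2 [show q = q^(1:ℝ) from (Real.rpow_one q).symm]
    rw [← Real.rpow_add hqpos, show k + -(k+1) + 1 = 0 by ring, Real.rpow_zero]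
  constructor
  · rw [show t^(-k-1/2) * (1+x^2/(2*t))^(-(k+1)) * (r * (|x|+r)^(2*k)) * q
        = (t^(-k-1/2) * (r * (|x|+r)^(2*k))) * (1+x^2/(2*t))^(-(k+1)) * q by ring, E1]
    calc (1:ℝ) = q^k * q^(-(k+1)) * q := hqq.symm
      _ ≤ A^k * (1+x^2/(2*t))^(-(k+1)) * q := by
          apply mul_le_mul_of_nonneg_right _ hqpos.le
          exact mul_le_mul hAk_lo hpw_lo hqk1.le hAk_pos.le
  · rw [show t^(-k-1/2) * (1+x^2/(2*t))^(-(k+1)) * (r * (|x|+r)^(2*k)) * q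
        = (t^(-k-1/2) * (r * (|x|+r)^(2*k))) * (1+x^2/(2*t))^(-(k+1)) * q by ring, E1]
    have h2k : (0:ℝ) < 2^k := Real.rpow_pos_of_pos two_pos _
    have h2k1 : (0:ℝ) < 2^(k+1) := Real.rpow_pos_of_pos two_pos _
    calc A^k * (1+x^2/(2*t))^(-(k+1)) * q
        ≤ (2^k * q^k) * (q^(-(k+1)) * 2^(k+1)) * q := by
          apply mul_le_mul_of_nonneg_right _ hqpos.le
          exact mul_le_mul hAk_hi hpw_hi hpw_pos.le (by positivity)
      _ = (2^k * 2^(k+1)) * (q^k * q^(-(k+1)) * q) := by ring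
      _ = 2^(2*k+1) := by
          rw [hqq, mul_one, ← Real.rpow_add two_pos, show k + (k+1) = 2*k+1 by ring]

end AuxLemmas

theorem heatH_antipodal_decay (k : ℝ) (hk : 0 < k) :
    ∃ c > (0:ℝ), ∃ C > (0:ℝ), ∀ t > (0:ℝ), ∀ x : ℝ,
      c ≤ heatH k t x (-x) *
            (dunklMeasure1 k (Metric.closedBall x (Real.sqrt t))).toReal *
            ((t + x ^ 2) / t) ∧
      heatH k t x (-x) *
          (dunklMeasure1 k (Metric.closedBall x (Real.sqrt t))).toReal *
          ((t + x ^ 2) / t) ≤ C := by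
  have hG1 : 0 < Real.Gamma (k+1/2) := Real.Gamma_pos_of_pos (by linarith)
  have hG2 : 0 < Real.Gamma k := Real.Gamma_pos_of_pos hk
  have hG3 : 0 < Real.Gamma (1/2) := Real.Gamma_pos_of_pos (by norm_num)
  have h2p : (0:ℝ) < (2:ℝ)^(2*k+1) := Real.rpow_pos_of_pos two_pos _
  set K : ℝ := ((2:ℝ)^(2*k+1) * Real.Gamma (k+1/2))⁻¹
      * (Real.Gamma (k+1/2)/(Real.Gamma k * Real.Gamma (1/2))) with hK
  have hKpos : 0 < K := by positivity
  set c1 : ℝ := min 1 (2^(k-1)) * Real.exp (-1) / (k+1) with hc1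
  have hminpos : (0:ℝ) < min 1 (2^(k-1)) := lt_min one_pos (Real.rpow_pos_of_pos two_pos _)
  have hc1pos : 0 < c1 := by positivity
  set C1 : ℝ := 2^(k+1) * (B0 k + (2*k)^k * (2 * max 1 (2^(k-1)) + 2/k)) with hC1
  have hC1pos : 0 < C1 := by
    have h1 := B0_nonneg k
    have hMp : (0:ℝ) < max 1 (2^(k-1)) := lt_max_of_lt_left one_pos
    have h2 : (0:ℝ) < (2*k)^k * (2 * max 1 (2^(k-1)) + 2/k) := by positivity
    have h3 : (0:ℝ) < (2:ℝ)^(k+1) := Real.rpow_pos_of_pos two_pos _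
    exact mul_pos h3 (by linarith)
  set mμ : ℝ := (2 * (2:ℝ)^(2*k))⁻¹ with hmμ
  have hmμpos : 0 < mμ := by positivity
  have h2kpos : (0:ℝ) < (2:ℝ)^(2*k) := Real.rpow_pos_of_pos two_pos _
  have h2k1pos : (0:ℝ) < (2:ℝ)^(2*k+1) := Real.rpow_pos_of_pos two_pos _
  refine ⟨K * c1 * mμ, by positivity, K * C1 * 2 * 2^(2*k+1), by positivity, ?_⟩
  intro t ht x
  have htr : 0 < Real.sqrt t := Real.sqrt_pos.mpr ht
  have hs0 : (0:ℝ) ≤ x^2/(2*t) := by positivity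
  have hH := heatH_eq x hk ht
  have hJlo := J_lower (s := x^2/(2*t)) hk hs0
  have hJhi := J_upper (s := x^2/(2*t)) hk hs0
  have hμlo := measure_lower hk x (Real.sqrt t) htr
  have hμhi := measure_upper hk x (Real.sqrt t) htr
  have hcore := core_bounds (x := x) hk ht
  have hq0 : (0:ℝ) ≤ (t+x^2)/t := div_nonneg (by nlinarith [sq_nonneg x]) ht.le
  have hpwpos : (0:ℝ) < (1+x^2/(2*t))^(-(k+1)) := Real.rpow_pos_of_pos (by positivity) _
  have hWpos : (0:ℝ) < Real.sqrt t * (|x|+Real.sqrt t)^(2*k) := by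
    have : (0:ℝ) < |x| + Real.sqrt t := by positivity
    positivity
  have htp : (0:ℝ) < t^(-k-1/2) := Real.rpow_pos_of_pos ht _
  have hKT : (0:ℝ) ≤ K * t^(-k-1/2) := by positivity
  have hμB : (0:ℝ) ≤ (dunklMeasure1 k (Metric.closedBall x (Real.sqrt t))).toReal :=
    ENNReal.toReal_nonneg
  have hμlo' : mμ * (Real.sqrt t * (|x|+Real.sqrt t)^(2*k))
      ≤ (dunklMeasure1 k (Metric.closedBall x (Real.sqrt t))).toReal := by
    have e : Real.sqrt t/2 * ((|x|+Real.sqrt t)/2)^(2*k)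
        = mμ * (Real.sqrt t * (|x|+Real.sqrt t)^(2*k)) := by
      rw [Real.div_rpow (by positivity) (by norm_num : (0:ℝ) ≤ 2) (2*k), hmμ]
      field_simp
    rw [← e]
    exact hμlo
  have hμhi' : (dunklMeasure1 k (Metric.closedBall x (Real.sqrt t))).toReal
      ≤ 2 * (Real.sqrt t * (|x|+Real.sqrt t)^(2*k)) := by
    calc (dunklMeasure1 k (Metric.closedBall x (Real.sqrt t))).toReal
        ≤ 2*Real.sqrt t*(|x|+Real.sqrt t)^(2*k) := hμhi
      _ = 2 * (Real.sqrt t * (|x|+Real.sqrt t)^(2*k)) := by ring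
  have hJnn : (0:ℝ) ≤ ∫ u in (-1:ℝ)..1,
      (1-u)^(k-1) * ((1+u)^k * Real.exp (-(x^2/(2*t)) * (1+u))) :=
    le_trans (by positivity) hJlo
  constructor
  · -- lower bound
    calc K * c1 * mμ
        = K * c1 * mμ * 1 := (mul_one _).symm
      _ ≤ K * c1 * mμ * (t^(-k-1/2) * (1+x^2/(2*t))^(-(k+1))
            * (Real.sqrt t * (|x|+Real.sqrt t)^(2*k)) * ((t+x^2)/t)) :=
          mul_le_mul_of_nonneg_left hcore.1 (by positivity)
      _ = (K * t^(-k-1/2) * (c1 * (1+x^2/(2*t))^(-(k+1))))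
            * (mμ * (Real.sqrt t * (|x|+Real.sqrt t)^(2*k))) * ((t+x^2)/t) := by ring
      _ ≤ (K * t^(-k-1/2) * ∫ u in (-1:ℝ)..1,
              (1-u)^(k-1) * ((1+u)^k * Real.exp (-(x^2/(2*t)) * (1+u))))
            * (dunklMeasure1 k (Metric.closedBall x (Real.sqrt t))).toReal * ((t+x^2)/t) := by
          apply mul_le_mul_of_nonneg_right _ hq0
          apply mul_le_mul _ hμlo' (by positivity) _
          · exact mul_le_mul_of_nonneg_left hJlo hKT
          · exact mul_nonneg hKT hJnn
      _ = heatH k t x (-x) *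
            (dunklMeasure1 k (Metric.closedBall x (Real.sqrt t))).toReal * ((t + x ^ 2) / t) := by
          rw [hH]
  · -- upper bound
    calc heatH k t x (-x) *
            (dunklMeasure1 k (Metric.closedBall x (Real.sqrt t))).toReal * ((t + x ^ 2) / t)
        = (K * t^(-k-1/2) * ∫ u in (-1:ℝ)..1,
              (1-u)^(k-1) * ((1+u)^k * Real.exp (-(x^2/(2*t)) * (1+u))))
            * (dunklMeasure1 k (Metric.closedBall x (Real.sqrt t))).toReal * ((t+x^2)/t) := by
          rw [hH]
      _ ≤ (K * t^(-k-1/2) * (C1 * (1+x^2/(2*t))^(-(k+1))))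
            * (2 * (Real.sqrt t * (|x|+Real.sqrt t)^(2*k))) * ((t+x^2)/t) := by
          apply mul_le_mul_of_nonneg_right _ hq0
          apply mul_le_mul _ hμhi' hμB _
          · exact mul_le_mul_of_nonneg_left hJhi hKT
          · positivity
      _ = (K * C1 * 2) * (t^(-k-1/2) * (1+x^2/(2*t))^(-(k+1))
            * (Real.sqrt t * (|x|+Real.sqrt t)^(2*k)) * ((t+x^2)/t)) := by ring
      _ ≤ (K * C1 * 2) * 2^(2*k+1) :=
          mul_le_mul_of_nonneg_left hcore.2 (by positivity)
      _ = K * C1 * 2 * 2^(2*k+1) := rfl
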